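/- Let u be a radial function on the unit ball B ⊂ ℝ⁴ and γ > 0, and define w(t) = 2π√(2γ) · u(e^{−t/γ}). Then ∫_B |Δu|² dx = ∫_0^∞ |(γ/2) w''(t) − w'(t)|² dt, provided u is smooth enough for both sides to make sense. -/

import Mathlib

open MeasureTheory

noncomputable def ω₃ : ℝ := 2 * Real.pi ^ 2

/-- The radial Laplacian in dimension 4. -/
noncomputable def radLap (u : ℝ → ℝ) (r : ℝ) : ℝ :=
  deriv (deriv u) r + 3 / r * deriv u r

/-- Logarithmic change of variables identity for the biharmonic energy of a radial
function on the unit ball `B ⊂ ℝ⁴`: with `w(t) = 2π√(2γ) u(e^{-t/γ})`,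
`∫_B |Δu|² dx = 2π² ∫_0^1 |u''(r)+(3/r)u'(r)|² r³ dr = ∫_0^∞ |(γ/2)w''(t) - w'(t)|² dt`. -/
theorem biharmonic_energy_log_substitution (u : ℝ → ℝ) (γ : ℝ) (hγ : 0 < γ)
    (hu : ContDiffOn ℝ 2 u (Set.Ioo 0 1))
    (huc : ContinuousOn u (Set.Icc 0 1))
    (hL2 : IntegrableOn (fun r => (radLap u r) ^ 2 * r ^ 3) (Set.Ioo 0 1)) :
    2 * Real.pi ^ 2 * ∫ r in Set.Ioo (0:ℝ) 1, (radLap u r) ^ 2 * r ^ 3 =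
      ∫ t in Set.Ioi (0:ℝ),
        (γ / 2 * deriv (deriv (fun s : ℝ =>
            2 * Real.pi * Real.sqrt (2 * γ) * u (Real.exp (-s / γ)))) t -
          deriv (fun s : ℝ =>
            2 * Real.pi * Real.sqrt (2 * γ) * u (Real.exp (-s / γ))) t) ^ 2 := by
  have hγ' : γ ≠ 0 := ne_of_gt hγ
  set C : ℝ := 2 * Real.pi * Real.sqrt (2 * γ) with hC
  have hC2 : C ^ 2 = 8 * Real.pi ^ 2 * γ := by
    rw [hC, mul_pow, mul_pow, Real.sq_sqrt (by linarith)]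
    ring
  -- the exponential map and its derivative
  have hede : ∀ s : ℝ, HasDerivAt (fun s : ℝ => Real.exp (-s / γ))
      (Real.exp (-s / γ) * (-1 / γ)) s := by
    intro s
    have h1 : HasDerivAt (fun s : ℝ => -s / γ) (-1 / γ) s := by
      simpa using ((hasDerivAt_id s).neg.div_const γ)
    simpa using h1.exp
  have hmem : ∀ t ∈ Set.Ioi (0:ℝ), Real.exp (-t / γ) ∈ Set.Ioo (0:ℝ) 1 := by
    intro t ht
    refine ⟨Real.exp_pos _, ?_⟩
    rw [Real.exp_lt_one_iff]
    have : (0:ℝ) < t := ht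
    exact div_neg_of_neg_of_pos (by linarith) hγ
  -- derivatives of u
  have hopen : IsOpen (Set.Ioo (0:ℝ) 1) := isOpen_Ioo
  have hdu : ∀ x ∈ Set.Ioo (0:ℝ) 1, HasDerivAt u (deriv u x) x := fun x hx =>
    ((hu.differentiableOn (by norm_num)).differentiableAt (hopen.mem_nhds hx)).hasDerivAt
  have hdu2 : ContDiffOn ℝ 1 (deriv u) (Set.Ioo 0 1) := by
    have := hu.deriv_of_isOpen (m := 1) hopen (by norm_num)
    simpa using this
  have hddu : ∀ x ∈ Set.Ioo (0:ℝ) 1, HasDerivAt (deriv u) (deriv (deriv u) x) x := fun x hx =>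
    ((hdu2.differentiableOn (by norm_num)).differentiableAt (hopen.mem_nhds hx)).hasDerivAt
  -- first derivative of w
  set w : ℝ → ℝ := fun s : ℝ => 2 * Real.pi * Real.sqrt (2 * γ) * u (Real.exp (-s / γ)) with hw
  set v : ℝ → ℝ := fun s : ℝ =>
    C * (deriv u (Real.exp (-s / γ)) * (Real.exp (-s / γ) * (-1 / γ))) with hv
  have hw1 : ∀ s ∈ Set.Ioi (0:ℝ), HasDerivAt w (v s) s := by
    intro s hs
    exact ((hdu _ (hmem s hs)).comp s (hede s)).const_mul C
  have hveq : Set.EqOn (deriv w) v (Set.Ioi 0) := fun s hs => (hw1 s hs).deriv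
  -- second derivative of w
  have hw2 : ∀ t ∈ Set.Ioi (0:ℝ), deriv (deriv w) t =
      C * (deriv (deriv u) (Real.exp (-t / γ)) * (Real.exp (-t / γ) * (-1 / γ)) *
            (Real.exp (-t / γ) * (-1 / γ)) +
          deriv u (Real.exp (-t / γ)) * ((Real.exp (-t / γ) * (-1 / γ)) * (-1 / γ))) := by
    intro t ht
    have hev : deriv w =ᶠ[nhds t] v := by
      filter_upwards [isOpen_Ioi.mem_nhds ht] with s hs using hveq hs
    rw [hev.deriv_eq]
    have h1 : HasDerivAt (fun s : ℝ => deriv u (Real.exp (-s / γ)))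
        (deriv (deriv u) (Real.exp (-t / γ)) * (Real.exp (-t / γ) * (-1 / γ))) t :=
      by have := (hddu _ (hmem t ht)).comp t (hede t); exact this
    have h2 : HasDerivAt (fun s : ℝ => Real.exp (-s / γ) * (-1 / γ))
        ((Real.exp (-t / γ) * (-1 / γ)) * (-1 / γ)) t := (hede t).mul_const _
    exact (((h1.mul h2).const_mul C).deriv)
  -- the key pointwise identity on (0,∞)
  have key : ∀ t ∈ Set.Ioi (0:ℝ),
      2 * Real.pi ^ 2 * (|Real.exp (-t / γ) * (-1 / γ)| •
        ((radLap u (Real.exp (-t / γ))) ^ 2 * (Real.exp (-t / γ)) ^ 3)) =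
      (γ / 2 * deriv (deriv w) t - deriv w t) ^ 2 := by
    intro t ht
    rw [hw2 t ht, hveq ht, hv]
    set r : ℝ := Real.exp (-t / γ) with hr
    have hr0 : 0 < r := Real.exp_pos _
    set du : ℝ := deriv u r
    set ddu : ℝ := deriv (deriv u) r
    have habs : |r * (-1 / γ)| = r * (1 / γ) := by
      rw [abs_mul, abs_of_pos hr0, abs_div, abs_neg, abs_one, abs_of_pos hγ]
    rw [habs, smul_eq_mul, radLap]
    have h1 : γ / 2 * (C * (ddu * (r * (-1 / γ)) * (r * (-1 / γ)) +
        du * (r * (-1 / γ) * (-1 / γ)))) - C * (du * (r * (-1 / γ))) =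
        C / (2 * γ) * (r ^ 2 * ddu + 3 * r * du) := by
      field_simp
      ring
    rw [h1, mul_pow, div_pow, hC2]
    field_simp
    ring
  -- change of variables
  have himg : (fun t : ℝ => Real.exp (-t / γ)) '' Set.Ioi 0 = Set.Ioo 0 1 := by
    ext r
    constructor
    · rintro ⟨t, ht, rfl⟩
      exact hmem t ht
    · intro hrr
      refine ⟨-γ * Real.log r, ?_, ?_⟩
      · have hl : Real.log r < 0 := Real.log_neg hrr.1 hrr.2
        have : 0 < -γ * Real.log r := by nlinarith
        exact this
      · show Real.exp (-(-γ * Real.log r) / γ) = r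
        rw [show -(-γ * Real.log r) / γ = Real.log r by field_simp]
        exact Real.exp_log hrr.1
  have hinjOn : Set.InjOn (fun t : ℝ => Real.exp (-t / γ)) (Set.Ioi 0) := by
    intro a _ b _ hab
    have h := Real.exp_injective hab
    field_simp at h
    exact neg_inj.mp h
  have hcov : ∫ r in Set.Ioo (0:ℝ) 1, (radLap u r) ^ 2 * r ^ 3 =
      ∫ t in Set.Ioi (0:ℝ), |Real.exp (-t / γ) * (-1 / γ)| •
        ((radLap u (Real.exp (-t / γ))) ^ 2 * (Real.exp (-t / γ)) ^ 3) := by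
    rw [← himg]
    exact integral_image_eq_integral_abs_deriv_smul measurableSet_Ioi
      (fun t _ => (hede t).hasDerivWithinAt) hinjOn _
  rw [hcov, ← MeasureTheory.integral_const_mul]
  exact setIntegral_congr_fun measurableSet_Ioi key
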